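/- Let d be a natural number, let A be an invertible antisymmetric real d×d matrix, and let b ∈ ℝ^d. Then every twice differentiable function y : ℝ → ℝ^d satisfying y″(t) = A²·y(t) + b for all t ∈ ℝ is bounded: there exists M such that ‖y(t)‖ ≤ M for all t ∈ ℝ. -/

import Mathlib

open Matrix

/-- For an invertible antisymmetric matrix `A`, every twice differentiable solution of
`y″ = A² y + b` is bounded: deviation vectors along the null congruence with
non-degenerate rotation matrix oscillate and remain bounded (stable trapping). -/
theorem stmt15 (d : ℕ) (A : Matrix (Fin d) (Fin d) ℝ)
    (hA : IsUnit A) (hAanti : Aᵀ = -A)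
    (b : Fin d → ℝ) (y : ℝ → (Fin d → ℝ))
    (hy1 : Differentiable ℝ y) (hy2 : Differentiable ℝ (deriv y))
    (hode : ∀ t : ℝ, deriv (deriv y) t = (A * A).mulVec (y t) + b) :
    ∃ M : ℝ, ∀ t : ℝ, ‖y t‖ ≤ M := by
  classical
  have hAdet : IsUnit A.det := (Matrix.isUnit_iff_isUnit_det A).mp hA
  have hAAdet : IsUnit (A * A).det := by rw [Matrix.det_mul]; exact hAdet.mul hAdet
  set c : Fin d → ℝ := (A * A)⁻¹.mulVec b with hc
  have hcb : (A * A).mulVec c = b := by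
    rw [hc, Matrix.mulVec_mulVec, Matrix.mul_nonsing_inv _ hAAdet, Matrix.one_mulVec]
  set z : ℝ → Fin d → ℝ := fun t => y t + c with hzdef
  set E : ℝ → ℝ := fun t => (∑ i, (deriv y t i)^2) + ∑ i, (A.mulVec (z t) i)^2 with hEdef
  have hyd : ∀ t i, HasDerivAt (fun s => y s i) (deriv y t i) t := fun t i =>
    (hasDerivAt_pi.mp (hy1 t).hasDerivAt) i
  have hvd : ∀ t i, HasDerivAt (fun s => deriv y s i) ((A * A).mulVec (z t) i) t := by
    intro t i
    have h := (hy2 t).hasDerivAt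
    rw [hode t] at h
    have h2 := hasDerivAt_pi.mp h i
    have : (A * A).mulVec (z t) i = ((A * A).mulVec (y t) + b) i := by
      simp [hzdef, Matrix.mulVec_add, hcb]
    rw [this]; exact h2
  have hwd : ∀ t i, HasDerivAt (fun s => A.mulVec (z s) i) (A.mulVec (deriv y t) i) t := by
    intro t i
    have h : HasDerivAt (fun s => ∑ j, A i j * (y s j + c j)) (∑ j, A i j * deriv y t j) t := by
      apply HasDerivAt.fun_sum
      intro j _
      exact ((hyd t j).add_const (c j)).const_mul (A i j)
    have e1 : ∀ s : ℝ, A.mulVec (z s) i = ∑ j, A i j * (y s j + c j) := by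
      intro s; simp [hzdef, Matrix.mulVec, dotProduct]
    have e2 : A.mulVec (deriv y t) i = ∑ j, A i j * deriv y t j := by
      simp [Matrix.mulVec, dotProduct]
    simp only [e1, e2]
    exact h
  have key : ∀ t : ℝ,
      (∑ i, 2 * deriv y t i * (A * A).mulVec (z t) i)
        + ∑ i, 2 * A.mulVec (z t) i * A.mulVec (deriv y t) i = 0 := by
    intro t
    have h1 : ∑ i, 2 * deriv y t i * (A * A).mulVec (z t) i
        = 2 * (deriv y t ⬝ᵥ (A * A).mulVec (z t)) := by
      simp [dotProduct, Finset.mul_sum, mul_assoc]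
    have h2 : ∑ i, 2 * A.mulVec (z t) i * A.mulVec (deriv y t) i
        = 2 * (A.mulVec (z t) ⬝ᵥ A.mulVec (deriv y t)) := by
      simp [dotProduct, Finset.mul_sum, mul_assoc]
    have h3 : A.mulVec (z t) ⬝ᵥ A.mulVec (deriv y t)
        = -(deriv y t ⬝ᵥ (A * A).mulVec (z t)) := by
      rw [Matrix.dotProduct_mulVec, ← Matrix.mulVec_transpose, hAanti, Matrix.neg_mulVec,
        Matrix.mulVec_mulVec, neg_dotProduct, dotProduct_comm]
    rw [h1, h2, h3]; ring
  have hEderiv : ∀ t, HasDerivAt E 0 t := by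
    intro t
    have h1 : HasDerivAt (fun s => ∑ i, (deriv y s i)^2)
        (∑ i, 2 * deriv y t i * (A * A).mulVec (z t) i) t := by
      apply HasDerivAt.fun_sum
      intro i _
      have := (hvd t i).fun_pow 2
      simpa [mul_comm, mul_assoc, mul_left_comm] using this
    have h2 : HasDerivAt (fun s => ∑ i, (A.mulVec (z s) i)^2)
        (∑ i, 2 * A.mulVec (z t) i * A.mulVec (deriv y t) i) t := by
      apply HasDerivAt.fun_sum
      intro i _
      have := (hwd t i).fun_pow 2
      simpa [mul_comm, mul_assoc, mul_left_comm] using this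
    have := h1.add h2
    rw [key t] at this
    exact this
  have hEconst : ∀ t, E t = E 0 := fun t =>
    is_const_of_deriv_eq_zero (fun s => (hEderiv s).differentiableAt)
      (fun s => (hEderiv s).deriv) t 0
  have hE0 : 0 ≤ E 0 := by
    apply add_nonneg <;> exact Finset.sum_nonneg fun i _ => sq_nonneg _
  have hbound : ∀ t i, |A.mulVec (z t) i| ≤ Real.sqrt (E 0) := by
    intro t i
    have h1 : (A.mulVec (z t) i)^2 ≤ E t := by
      have : (A.mulVec (z t) i)^2 ≤ ∑ j, (A.mulVec (z t) j)^2 :=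
        Finset.single_le_sum (f := fun j => (A.mulVec (z t) j)^2)
          (fun j _ => sq_nonneg _) (Finset.mem_univ i)
      have hnn : (0:ℝ) ≤ ∑ j, (deriv y t j)^2 :=
        Finset.sum_nonneg fun j _ => sq_nonneg _
      calc (A.mulVec (z t) i)^2 ≤ ∑ j, (A.mulVec (z t) j)^2 := this
        _ ≤ E t := by
            have hEt : E t = (∑ j, (deriv y t j)^2) + ∑ j, (A.mulVec (z t) j)^2 := rfl
            rw [hEt]; linarith
    rw [hEconst t] at h1
    calc |A.mulVec (z t) i| = Real.sqrt ((A.mulVec (z t) i)^2) := by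
          rw [Real.sqrt_sq_eq_abs]
      _ ≤ Real.sqrt (E 0) := Real.sqrt_le_sqrt h1
  set S : ℝ := ∑ i, ∑ j, |A⁻¹ i j| with hS
  have hSnn : 0 ≤ S := Finset.sum_nonneg fun i _ =>
    Finset.sum_nonneg fun j _ => abs_nonneg _
  have hzb : ∀ t, ‖z t‖ ≤ S * Real.sqrt (E 0) := by
    intro t
    rw [pi_norm_le_iff_of_nonneg (mul_nonneg hSnn (Real.sqrt_nonneg _))]
    intro i
    have hzi : z t = A⁻¹.mulVec (A.mulVec (z t)) := by
      rw [Matrix.mulVec_mulVec, Matrix.nonsing_inv_mul _ hAdet, Matrix.one_mulVec]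
    rw [Real.norm_eq_abs, hzi]
    calc |A⁻¹.mulVec (A.mulVec (z t)) i| = |∑ j, A⁻¹ i j * A.mulVec (z t) j| := by
          simp [Matrix.mulVec, dotProduct]
      _ ≤ ∑ j, |A⁻¹ i j * A.mulVec (z t) j| := Finset.abs_sum_le_sum_abs _ _
      _ = ∑ j, |A⁻¹ i j| * |A.mulVec (z t) j| := by simp [abs_mul]
      _ ≤ ∑ j, |A⁻¹ i j| * Real.sqrt (E 0) := by
          apply Finset.sum_le_sum
          intro j _
          exact mul_le_mul_of_nonneg_left (hbound t j) (abs_nonneg _)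
      _ = (∑ j, |A⁻¹ i j|) * Real.sqrt (E 0) := by rw [Finset.sum_mul]
      _ ≤ S * Real.sqrt (E 0) := by
          apply mul_le_mul_of_nonneg_right _ (Real.sqrt_nonneg _)
          rw [hS]
          exact Finset.single_le_sum (f := fun k => ∑ j, |A⁻¹ k j|)
            (fun k _ => Finset.sum_nonneg fun j _ => abs_nonneg _) (Finset.mem_univ i)
  refine ⟨S * Real.sqrt (E 0) + ‖c‖, fun t => ?_⟩
  have : y t = z t - c := by simp [hzdef]
  rw [this]
  calc ‖z t - c‖ ≤ ‖z t‖ + ‖c‖ := norm_sub_le _ _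
    _ ≤ S * Real.sqrt (E 0) + ‖c‖ := add_le_add (hzb t) le_rfl
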